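/- For real q > 0, b < 0 with -1/b > n/q, and dimension n ≥ 1, the integral over ℝⁿ of (1 + |x|^q)^{1/b} equals (2π^{n/2}/q)·Γ(n/q)Γ(-n/q - 1/b)/(Γ(n/2)Γ(-1/b)). -/

import Mathlib

open MeasureTheory Real Set

-- real Beta integral on (0,1)
lemma realBeta_aux {s t : ℝ} (hs : 0 < s) (ht : 0 < t) :
    ∫ x in Ioo (0:ℝ) 1, x ^ (s-1) * (1-x) ^ (t-1)
      = Gamma s * Gamma t / Gamma (s+t) := by
  have h := @Complex.Gamma_mul_Gamma_eq_betaIntegral (s:ℂ) (t:ℂ)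
    (by simpa using hs) (by simpa using ht)
  have hB : Complex.betaIntegral s t
      = ((∫ x in (0:ℝ)..1, x ^ (s-1) * (1-x) ^ (t-1) : ℝ) : ℂ) := by
    rw [Complex.betaIntegral, ← intervalIntegral.integral_ofReal]
    refine intervalIntegral.integral_congr fun x hx => ?_
    rw [uIcc_of_le zero_le_one] at hx
    rw [Complex.ofReal_mul, Complex.ofReal_cpow hx.1, Complex.ofReal_cpow (by linarith [hx.2])]
    push_cast
    ring
  rw [hB] at h
  have h2 : Gamma s * Gamma t
      = Gamma (s+t) * ∫ x in (0:ℝ)..1, x ^ (s-1) * (1-x) ^ (t-1) := by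
    have h' := h
    rw [show ((s:ℂ)+(t:ℂ)) = ((s+t:ℝ):ℂ) by push_cast; ring] at h'
    rw [Complex.Gamma_ofReal, Complex.Gamma_ofReal, Complex.Gamma_ofReal] at h'
    exact_mod_cast h'
  have hne : Gamma (s+t) ≠ 0 := (Gamma_pos_of_pos (by linarith)).ne'
  rw [intervalIntegral.integral_of_le zero_le_one, integral_Ioc_eq_integral_Ioo] at h2
  field_simp [h2]
  rw [h2]; ring

lemma betaIoi_aux {s t : ℝ} (hs : 0 < s) (ht : 0 < t) :
    ∫ u in Ioi (0:ℝ), u ^ (s-1) * (1+u) ^ (-(s+t))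
      = Gamma s * Gamma t / Gamma (s+t) := by
  have hder : ∀ x ∈ Ioo (0:ℝ) 1,
      HasDerivWithinAt (fun y : ℝ => y / (1-y)) (((1-x)^2)⁻¹) (Ioo 0 1) x := by
    intro x hx
    have hne : 1 - x ≠ 0 := ne_of_gt (by linarith [hx.2])
    have h := (hasDerivAt_id x).div ((hasDerivAt_const x (1:ℝ)).sub (hasDerivAt_id x)) hne
    exact (h.congr_deriv (by simp only [Pi.sub_apply, id]; ring)).hasDerivWithinAt
  have hinj : InjOn (fun y : ℝ => y / (1-y)) (Ioo 0 1) := by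
    intro x hx y hy hxy
    have h1 : 1 - x ≠ 0 := ne_of_gt (by linarith [hx.2])
    have h2 : 1 - y ≠ 0 := ne_of_gt (by linarith [hy.2])
    field_simp at hxy
    nlinarith [hxy]
  have himg : (fun y : ℝ => y / (1-y)) '' Ioo 0 1 = Ioi 0 := by
    ext y
    simp only [mem_image, mem_Ioo, mem_Ioi]
    constructor
    · rintro ⟨x, ⟨hx0, hx1⟩, rfl⟩
      exact div_pos hx0 (by linarith)
    · intro hy
      refine ⟨y / (1+y), ⟨div_pos hy (by linarith), ?_⟩, ?_⟩
      · rw [div_lt_one (by linarith)]; linarith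
      · have h1y : (1:ℝ) + y ≠ 0 := by positivity
        field_simp
        ring
  have key := integral_image_eq_integral_abs_deriv_smul measurableSet_Ioo hder hinj
      (fun u => u ^ (s-1) * (1+u) ^ (-(s+t)))
  rw [himg] at key
  rw [key, ← realBeta_aux hs ht]
  refine setIntegral_congr_fun measurableSet_Ioo fun x hx => ?_
  obtain ⟨hx0, hx1⟩ := hx
  have hc : (0:ℝ) < 1 - x := by linarith
  have hfx : 1 + x / (1-x) = (1-x)⁻¹ := by field_simp; ring
  have h1 : (x/(1-x)) ^ (s-1) = x ^ (s-1) * (1-x) ^ (1-s) := by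
    rw [Real.div_rpow hx0.le hc.le, div_eq_mul_inv, ← Real.rpow_neg hc.le, neg_sub]
  have h2 : (1 + x/(1-x)) ^ (-(s+t)) = (1-x) ^ (s+t) := by
    rw [hfx, ← Real.rpow_neg_one (1-x), ← Real.rpow_mul hc.le]
    norm_num
  have h3 : (((1-x)^2)⁻¹ : ℝ) = (1-x) ^ (-2:ℝ) := by
    rw [show ((1-x)^2 : ℝ) = (1-x) ^ ((2:ℕ):ℝ) by rw [Real.rpow_natCast],
      ← Real.rpow_neg hc.le]
    norm_num
  rw [smul_eq_mul, abs_of_pos (by positivity)]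
  rw [h1, h2, h3]
  have hcomb : (1-x)^(-2:ℝ) * ((1-x)^(1-s) * (1-x)^(s+t)) = (1-x)^(t-1) := by
    rw [← Real.rpow_add hc, ← Real.rpow_add hc]
    congr 1
    ring
  calc (1-x)^(-2:ℝ) * (x^(s-1) * (1-x)^(1-s) * (1-x)^(s+t))
      = x^(s-1) * ((1-x)^(-2:ℝ) * ((1-x)^(1-s) * (1-x)^(s+t))) := by ring
    _ = x^(s-1) * (1-x)^(t-1) := by rw [hcomb]

lemma radial_aux (n : ℕ) (hn : 1 ≤ n) {q b : ℝ} (hq : 0 < q) (hb : b < 0)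
    (hconv : (n : ℝ) / q < -1 / b) :
    ∫ y in Ioi (0:ℝ), y ^ (n-1) • (1 + y ^ q) ^ (1/b)
      = (1/q) * (Gamma ((n:ℝ)/q) * Gamma (-(n:ℝ)/q - 1/b) / Gamma (-1/b)) := by
  have hn' : (0:ℝ) < n := by exact_mod_cast hn
  have hs : 0 < (n:ℝ)/q := div_pos hn' hq
  have ht : 0 < -(n:ℝ)/q - 1/b := by
    have h1 : -(n:ℝ)/q = -((n:ℝ)/q) := by ring
    have h2 : (-1:ℝ)/b = -(1/b) := by ring
    rw [h1]; rw [h2] at hconv; linarith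
  have hbeta := betaIoi_aux hs ht
  simp only [show (n:ℝ)/q + (-(n:ℝ)/q - 1/b) = -(1/b) from by ring, neg_neg] at hbeta
  rw [show (-(1/b):ℝ) = -1/b from by ring] at hbeta
  have hsub := integral_comp_rpow_Ioi_of_pos
    (g := fun u : ℝ => u ^ ((n:ℝ)/q - 1) * (1+u) ^ (1/b)) hq
  have hint : ∀ x ∈ Ioi (0:ℝ), (q * x ^ (q-1)) •
      ((fun u : ℝ => u ^ ((n:ℝ)/q - 1) * (1+u) ^ (1/b)) (x ^ q))
        = q * (x ^ (n-1) • (1 + x ^ q) ^ (1/b)) := by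
    intro x hx
    have hx0 : (0:ℝ) < x := hx
    have e1 : (x ^ q) ^ ((n:ℝ)/q - 1) = x ^ ((n:ℝ) - q) := by
      rw [← Real.rpow_mul hx0.le]
      congr 1
      field_simp
    have e2 : x ^ (n-1) = x ^ ((n:ℝ) - 1) := by
      rw [← Real.rpow_natCast x (n-1), Nat.cast_sub hn, Nat.cast_one]
    simp only [smul_eq_mul, e1, e2]
    rw [show q * x ^ (q-1) * (x ^ ((n:ℝ) - q) * (1 + x ^ q) ^ (1/b))
        = q * ((x ^ (q-1) * x ^ ((n:ℝ) - q)) * (1 + x ^ q) ^ (1/b)) from by ring,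
      ← Real.rpow_add hx0]
    congr 2
    ring
  rw [setIntegral_congr_fun measurableSet_Ioi hint] at hsub
  rw [integral_const_mul] at hsub
  rw [hbeta] at hsub
  rw [← hsub]
  field_simp

theorem stmt2 (n : ℕ) (hn : 1 ≤ n) (q b : ℝ) (hq : 0 < q) (hb : b < 0)
    (hconv : (n : ℝ) / q < -1 / b) :
    ∫ x : EuclideanSpace ℝ (Fin n), (1 + ‖x‖ ^ q) ^ (1 / b)
      = (2 * Real.pi ^ ((n : ℝ) / 2) / q) *
        (Real.Gamma ((n : ℝ) / q) * Real.Gamma (-(n : ℝ) / q - 1 / b) /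
          (Real.Gamma ((n : ℝ) / 2) * Real.Gamma (-1 / b))) := by
  haveI : Nonempty (Fin n) := ⟨⟨0, hn⟩⟩
  have hn' : (0:ℝ) < n := by exact_mod_cast hn
  have h := integral_fun_norm_addHaar (volume : Measure (EuclideanSpace ℝ (Fin n)))
      (fun y : ℝ => (1 + y ^ q) ^ (1/b))
  simp only [finrank_euclideanSpace_fin] at h
  have hvol : (volume (Metric.ball (0:EuclideanSpace ℝ (Fin n)) 1)).toReal
      = π ^ ((n:ℝ)/2) / Gamma ((n:ℝ)/2 + 1) := by
    rw [EuclideanSpace.volume_ball, Fintype.card_fin]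
    have hpow : Real.sqrt π ^ n = π ^ ((n:ℝ)/2) := by
      rw [sqrt_eq_rpow, ← Real.rpow_natCast (π ^ ((1:ℝ)/2)) n, ← Real.rpow_mul pi_pos.le]
      congr 1
      ring
    have hg : 0 < Gamma ((n:ℝ)/2 + 1) := Gamma_pos_of_pos (by positivity)
    rw [ENNReal.ofReal_one, one_pow, one_mul, ENNReal.toReal_ofReal (by positivity), hpow]
  rw [h, radial_aux n hn hq hb hconv, measureReal_def, hvol]
  rw [Real.Gamma_add_one (by positivity : ((n:ℝ)/2) ≠ 0)]
  have hg2 : Gamma ((n:ℝ)/2) ≠ 0 := (Gamma_pos_of_pos (by positivity)).ne'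
  have hgb : Gamma (-1/b) ≠ 0 := by
    refine (Gamma_pos_of_pos ?_).ne'
    have : (0:ℝ) < (n:ℝ)/q := div_pos hn' hq
    linarith
  rw [nsmul_eq_mul, smul_eq_mul]
  field_simp
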